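/- A linear code C ⊆ F_3^n is m-trifferent if and only if it is m-minimal, i.e., every three distinct codewords of C triffer in at least m coordinates if and only if after deleting any m−1 coordinates, all codewords of C remain distinct and the resulting code is minimal. -/
import Mathlib


/-- Three words in `F_3^n` triffer at position `i` if their `i`-th coordinates are
the three distinct elements of `F_3`. -/
def TriffersZ {n : ℕ} (a b c : Fin n → ZMod 3) (i : Fin n) : Prop :=
  ({a i, b i, c i} : Finset (ZMod 3)) = Finset.univ

instance {n : ℕ} (a b c : Fin n → ZMod 3) (i : Fin n) : Decidable (TriffersZ a b c i) := by
  unfold TriffersZ; infer_instance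

/-- A set of words is `m`-trifferent if every three distinct elements triffer in
at least `m` positions. -/
def IsTrifferentSet {n : ℕ} (m : ℕ) (S : Set (Fin n → ZMod 3)) : Prop :=
  ∀ x ∈ S, ∀ y ∈ S, ∀ z ∈ S, x ≠ y → x ≠ z → y ≠ z →
    m ≤ (Finset.univ.filter fun i => TriffersZ x y z i).card

/-- A linear code is `m`-minimal if after deleting any `m - 1` coordinates all
codewords remain distinct, and the remaining code is minimal: for any two
codewords whose restrictions are linearly independent, the restricted support of
the first is not contained in that of the second. -/
def IsMMinimal {n : ℕ} (m : ℕ) (C : Submodule (ZMod 3) (Fin n → ZMod 3)) : Prop :=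
  ∀ D : Finset (Fin n), D.card = m - 1 →
    (∀ x ∈ C, ∀ y ∈ C, (∀ i ∉ D, x i = y i) → x = y) ∧
    (∀ x ∈ C, ∀ y ∈ C,
      (∀ a b : ZMod 3, (∀ i ∉ D, a * x i + b * y i = 0) → a = 0 ∧ b = 0) →
      ¬ (Finset.univ.filter fun i => i ∉ D ∧ x i ≠ 0) ⊆
        (Finset.univ.filter fun i => i ∉ D ∧ y i ≠ 0))

lemma triffZ_iff {n : ℕ} (x y z : Fin n → ZMod 3) (i : Fin n) :
    TriffersZ x y z i ↔ (x i - z i ≠ 0 ∧ (x i - z i) + (y i - z i) = 0) := by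
  have h : ∀ a b c : ZMod 3,
      (({a, b, c} : Finset (ZMod 3)) = Finset.univ) ↔ (a - c ≠ 0 ∧ (a - c) + (b - c) = 0) := by
    decide
  exact h (x i) (y i) (z i)

lemma zmod3_cases : ∀ a : ZMod 3, a = 0 ∨ a = 1 ∨ a = 2 := by decide

theorem stmt14 (n m : ℕ) (hm : 1 ≤ m) (hmn : m ≤ n)
    (C : Submodule (ZMod 3) (Fin n → ZMod 3)) :
    IsTrifferentSet m (C : Set (Fin n → ZMod 3)) ↔ IsMMinimal m C := by
  have hmlt : m - 1 < m := Nat.sub_lt hm one_pos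
  constructor
  · -- trifferent → m-minimal
    intro hT D hD
    constructor
    · intro x hx y hy hag
      by_contra hxy
      have hu0 : x - y ≠ 0 := sub_ne_zero.mpr hxy
      have h1 : x - y ≠ -(x - y) := by
        intro h
        apply hu0
        funext i
        have h2 := congrFun h i
        simp only [Pi.neg_apply] at h2
        have h3 : ∀ p : ZMod 3, p = -p → p = 0 := by decide
        exact h3 _ h2
      have key := hT (x - y) (sub_mem hx hy) (-(x - y)) (neg_mem (sub_mem hx hy))
        0 (zero_mem C) h1 hu0 (neg_ne_zero.mpr hu0)
      have hsub : (Finset.univ.filter fun i => TriffersZ (x - y) (-(x - y)) 0 i) ⊆ D := by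
        intro i hi
        simp only [Finset.mem_filter] at hi
        have h2 := (triffZ_iff _ _ _ _).mp hi.2
        by_contra hiD
        apply h2.1
        simp only [Pi.sub_apply, Pi.zero_apply, hag i hiD]
        ring
      have := key.trans (Finset.card_le_card hsub)
      omega
    · intro x hx y hy hindep hsub
      have hx0 : x ≠ 0 := by
        intro h
        exact one_ne_zero ((hindep 1 0 (fun i _ => by simp [h])).1)
      have hv0 : y - x ≠ 0 := by
        intro h
        refine one_ne_zero ((hindep 1 (-1) (fun i _ => ?_)).1)
        have h2 : y i - x i = 0 := by
          have := congrFun h i; simpa using this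
        linear_combination -h2
      have hxv : x ≠ y - x := by
        intro h
        refine one_ne_zero ((hindep 1 1 (fun i _ => ?_)).1)
        have h2 : x i = y i - x i := congrFun h i
        have h3 : ∀ p q : ZMod 3, p = q - p → 1 * p + 1 * q = 0 := by decide
        exact h3 _ _ h2
      have key := hT x hx (y - x) (sub_mem hy hx) 0 (zero_mem C) hxv hx0 hv0
      have hsubD : (Finset.univ.filter fun i => TriffersZ x (y - x) 0 i) ⊆ D := by
        intro i hi
        simp only [Finset.mem_filter] at hi
        have h2 := (triffZ_iff _ _ _ _).mp hi.2
        simp only [Pi.sub_apply, Pi.zero_apply, sub_zero] at h2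
        by_contra hiD
        have hy0 : y i = 0 := by linear_combination h2.2
        have hmem : i ∈ Finset.univ.filter fun j => j ∉ D ∧ x j ≠ 0 := by
          simp only [Finset.mem_filter, Finset.mem_univ, true_and]
          exact ⟨hiD, h2.1⟩
        have := hsub hmem
        simp only [Finset.mem_filter, Finset.mem_univ, true_and] at this
        exact this.2 hy0
      have := key.trans (Finset.card_le_card hsubD)
      omega
  · -- m-minimal → trifferent
    intro hM x hx y hy z hz hxy hxz hyz
    by_contra hcard
    set T := Finset.univ.filter fun i => TriffersZ x y z i with hTdef
    have hTcard : T.card ≤ m - 1 := by omega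
    obtain ⟨D, hTD, -, hDcard⟩ :=
      Finset.exists_subsuperset_card_eq (T.subset_univ) hTcard
        (by simpa using (by omega : m - 1 ≤ n))
    obtain ⟨ha, hb⟩ := hM D hDcard
    have hu0 : x - z ≠ 0 := sub_ne_zero.mpr hxz
    have hv0 : y - z ≠ 0 := sub_ne_zero.mpr hyz
    have huv : x - z ≠ y - z := fun h => hxy (by
      funext i
      have := congrFun h i
      simp only [Pi.sub_apply] at this
      linear_combination this)
    have hmemT : ∀ i, i ∈ T ↔ ((x i - z i ≠ 0) ∧ (x i - z i) + (y i - z i) = 0) := by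
      intro i
      rw [hTdef, Finset.mem_filter]
      simp [triffZ_iff, Finset.mem_univ]
    by_cases hw : (x - z) + (y - z) = (0 : Fin n → ZMod 3)
    · -- w = 0 case
      apply hxz
      apply ha x hx z hz
      intro i hiD
      have hiT : i ∉ T := fun h => hiD (hTD h)
      rw [hmemT] at hiT
      have hwi : (x i - z i) + (y i - z i) = 0 := by
        have := congrFun hw i
        simpa using this
      have : ¬ (x i - z i ≠ 0) := fun h => hiT ⟨h, hwi⟩
      have h2 : x i - z i = 0 := not_not.mp this
      linear_combination h2
    · -- w ≠ 0 case
      have huC : x - z ∈ C := sub_mem hx hz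
      have hwC : (x - z) + (y - z) ∈ C := add_mem (sub_mem hx hz) (sub_mem hy hz)
      have hbapp := hb (x - z) huC ((x - z) + (y - z)) hwC ?_
      · apply hbapp
        intro i hi
        simp only [Finset.mem_filter, Finset.mem_univ, true_and] at hi ⊢
        refine ⟨hi.1, fun hwi => ?_⟩
        have hiT : i ∈ T := by
          rw [hmemT]
          refine ⟨hi.2, ?_⟩
          simpa using hwi
        exact hi.1 (hTD hiT)
      · intro a b hab
        have hsC : a • (x - z) + b • ((x - z) + (y - z)) ∈ C :=
          add_mem (Submodule.smul_mem C a huC) (Submodule.smul_mem C b hwC)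
        have hs0 : a • (x - z) + b • ((x - z) + (y - z)) = 0 := by
          apply ha _ hsC 0 (zero_mem C)
          intro i hiD
          have h4 := hab i hiD
          simp only [Pi.add_apply, Pi.sub_apply] at h4
          simp only [Pi.add_apply, Pi.smul_apply, Pi.sub_apply, Pi.zero_apply, smul_eq_mul]
          linear_combination h4
        have hpt : ∀ i, (a + b) * (x i - z i) + b * (y i - z i) = 0 := by
          intro i
          have h2 := congrFun hs0 i
          simp only [Pi.add_apply, Pi.smul_apply, Pi.sub_apply, Pi.zero_apply,
            smul_eq_mul] at h2
          linear_combination h2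
        rcases zmod3_cases (a + b) with hα | hα | hα <;>
          rcases zmod3_cases b with hβ | hβ | hβ
        · exact ⟨by linear_combination hα - hβ, hβ⟩
        · exfalso; apply hv0; funext i
          have h2 := hpt i; rw [hα, hβ] at h2
          have h3 : ∀ p q : ZMod 3, 0 * p + 1 * q = 0 → q = 0 := by decide
          simpa using h3 _ _ h2
        · exfalso; apply hv0; funext i
          have h2 := hpt i; rw [hα, hβ] at h2
          have h3 : ∀ p q : ZMod 3, 0 * p + 2 * q = 0 → q = 0 := by decide
          simpa using h3 _ _ h2
        · exfalso; apply hu0; funext i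
          have h2 := hpt i; rw [hα, hβ] at h2
          have h3 : ∀ p q : ZMod 3, 1 * p + 0 * q = 0 → p = 0 := by decide
          simpa using h3 _ _ h2
        · exfalso; apply hw; funext i
          have h2 := hpt i; rw [hα, hβ] at h2
          have h3 : ∀ p q : ZMod 3, 1 * p + 1 * q = 0 → p + q = 0 := by decide
          simpa using h3 _ _ h2
        · exfalso; apply huv; funext i
          have h2 := hpt i; rw [hα, hβ] at h2
          have h3 : ∀ p q : ZMod 3, 1 * p + 2 * q = 0 → p = q := by decide
          simpa using h3 _ _ h2
        · exfalso; apply hu0; funext i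
          have h2 := hpt i; rw [hα, hβ] at h2
          have h3 : ∀ p q : ZMod 3, 2 * p + 0 * q = 0 → p = 0 := by decide
          simpa using h3 _ _ h2
        · exfalso; apply huv; funext i
          have h2 := hpt i; rw [hα, hβ] at h2
          have h3 : ∀ p q : ZMod 3, 2 * p + 1 * q = 0 → p = q := by decide
          simpa using h3 _ _ h2
        · exfalso; apply hw; funext i
          have h2 := hpt i; rw [hα, hβ] at h2
          have h3 : ∀ p q : ZMod 3, 2 * p + 2 * q = 0 → p + q = 0 := by decide
          simpa using h3 _ _ h2
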